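/- Let I be a finite set and let d : I → ℕ be a primitive vector (the greatest common divisor of the d_i is 1). Let θ⁰, …, θᵏ ∈ ℝ^I satisfy θʲ · d = 0 for every j, and suppose the linear span of θ⁰, …, θᵏ in ℝ^I has dimension at least |I| − 1. Then for every d′ : I → ℕ with d′_i ≤ d_i for all i and d′ ∉ {0, d}, there exists some j with θʲ · d′ ≠ 0 (i.e. d is θ-coprime for the polynomial array θ = Σ_j θʲ tʲ). -/

import Mathlib

open scoped RealInnerProductSpace

section Aux

variable {I : Type} [Fintype I]

private noncomputable def eE : (I → ℝ) ≃ₗ[ℝ] EuclideanSpace ℝ I :=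
  (WithLp.linearEquiv 2 ℝ (I → ℝ)).symm

private lemma inner_eE (x y : I → ℝ) :
    ⟪(eE x : EuclideanSpace ℝ I), eE y⟫ = ∑ i, x i * y i := by
  simp [eE, PiLp.inner_apply, RCLike.inner_apply, WithLp.linearEquiv_symm_apply]
  exact Finset.sum_congr rfl fun i _ => mul_comm _ _

end Aux

/-- If `d ∈ ℕ^I` is primitive, the arrays `θ⁰, …, θᵏ ∈ ℝ^I` satisfy
`θʲ·d = 0` for all `j` and span a subspace of dimension at least `|I| - 1`, then `d` is
`θ`-coprime: for every `d' ∈ ℕ^I` with `d' ≤ d`, `d' ≠ 0`, `d' ≠ d` there is some `j`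
with `θʲ·d' ≠ 0`. -/
theorem theta_coprime_of_primitive {I : Type} [Fintype I]
    (d : I → ℕ) (hprim : Finset.univ.gcd d = 1)
    (k : ℕ) (θ : Fin (k + 1) → I → ℝ)
    (horth : ∀ j, ∑ i, θ j i * (d i : ℝ) = 0)
    (hspan : Fintype.card I - 1 ≤
      Module.finrank ℝ ↥(Submodule.span ℝ (Set.range θ))) :
    ∀ d' : I → ℕ, (∀ i, d' i ≤ d i) → d' ≠ 0 → d' ≠ d →
      ∃ j, ∑ i, θ j i * (d' i : ℝ) ≠ 0 := by
  intro d' hle hne0 hned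
  by_contra h
  push_neg at h
  -- move to the Euclidean space
  set V : Submodule ℝ (I → ℝ) := Submodule.span ℝ (Set.range θ) with hV
  set V' : Submodule ℝ (EuclideanSpace ℝ I) := V.map ((eE : (I → ℝ) ≃ₗ[ℝ] _) : (I → ℝ) →ₗ[ℝ] _) with hV'
  have hV'rank : Module.finrank ℝ V' = Module.finrank ℝ V := by
    rw [hV']; exact LinearEquiv.finrank_map_eq eE V
  have hmemperp : ∀ x : I → ℝ, (∀ j, ∑ i, θ j i * x i = 0) → eE x ∈ V'ᗮ := by
    intro x hx
    rw [Submodule.mem_orthogonal]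
    intro u hu
    rw [hV', hV, Submodule.map_span] at hu
    induction hu using Submodule.span_induction with
    | mem u hu =>
        obtain ⟨-, ⟨j, rfl⟩, rfl⟩ := hu
        rw [LinearEquiv.coe_coe, inner_eE]
        exact hx j
    | zero => simp
    | add u v _ _ hu hv => rw [inner_add_left, hu, hv, add_zero]
    | smul a u _ hu => rw [inner_smul_left, hu, mul_zero]
  -- basic facts
  have hdne : (fun i => (d i : ℝ)) ≠ 0 := by
    intro hcon
    apply one_ne_zero (α := ℕ)
    rw [← hprim]
    apply Finset.gcd_eq_zero_iff.mpr
    intro i _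
    have h2 := congrFun hcon i
    simp only [Pi.zero_apply] at h2
    exact_mod_cast h2
  have hEd : eE (fun i => (d i : ℝ)) ∈ V'ᗮ := hmemperp _ horth
  have hEd' : eE (fun i => (d' i : ℝ)) ∈ V'ᗮ := hmemperp _ h
  have hEdne : eE (fun i => (d i : ℝ)) ≠ 0 := by
    simpa using (eE : (I → ℝ) ≃ₗ[ℝ] EuclideanSpace ℝ I).map_ne_zero_iff.mpr hdne
  -- dimension count
  have hsum : Module.finrank ℝ V' + Module.finrank ℝ V'ᗮ = Fintype.card I := by
    rw [Submodule.finrank_add_finrank_orthogonal, finrank_euclideanSpace]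
  have hperp_le : Module.finrank ℝ V'ᗮ ≤ 1 := by
    have := hV'rank ▸ hspan
    omega
  have hspan_le : (ℝ ∙ (eE (fun i => (d i : ℝ)) : EuclideanSpace ℝ I)) ≤ V'ᗮ := by
    rw [Submodule.span_singleton_le_iff_mem]
    exact hEd
  have hrank1 : Module.finrank ℝ (ℝ ∙ (eE (fun i => (d i : ℝ)) : EuclideanSpace ℝ I)) = 1 :=
    finrank_span_singleton hEdne
  have hEq : (ℝ ∙ (eE (fun i => (d i : ℝ)) : EuclideanSpace ℝ I)) = V'ᗮ :=
    Submodule.eq_of_le_of_finrank_le hspan_le (by rw [hrank1]; exact hperp_le)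
  rw [← hEq, Submodule.mem_span_singleton] at hEd'
  obtain ⟨c, hc⟩ := hEd'
  have hc' : ∀ i, (d' i : ℝ) = c * d i := by
    intro i
    have hc2 : (fun i => (d' i : ℝ)) = c • (fun i => (d i : ℝ)) := by
      apply eE.injective
      rw [map_smul, hc]
    have := congrFun hc2 i
    simpa [smul_eq_mul] using this
  -- number theory part
  obtain ⟨i₀, hi₀⟩ : ∃ i, d' i ≠ 0 := by
    by_contra hcon
    push_neg at hcon
    exact hne0 (funext hcon)
  have hkey : ∀ i, d' i * d i₀ = d i * d' i₀ := by
    intro i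
    have : ((d' i : ℝ)) * d i₀ = (d i : ℝ) * d' i₀ := by
      rw [hc' i, hc' i₀]; ring
    exact_mod_cast this
  set g := Nat.gcd (d' i₀) (d i₀) with hg
  have hgpos : 0 < g := Nat.gcd_pos_of_pos_left _ (Nat.pos_of_ne_zero hi₀)
  set p := d' i₀ / g with hp
  set q := d i₀ / g with hq
  have hpg : p * g = d' i₀ := Nat.div_mul_cancel (Nat.gcd_dvd_left _ _)
  have hqg : q * g = d i₀ := Nat.div_mul_cancel (Nat.gcd_dvd_right _ _)
  have hcop : Nat.Coprime p q := Nat.coprime_div_gcd_div_gcd hgpos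
  have hkey2 : ∀ i, d' i * q = d i * p := by
    intro i
    apply Nat.eq_of_mul_eq_mul_right hgpos
    calc d' i * q * g = d' i * (q * g) := by ring
      _ = d i * (p * g) := by rw [hqg, hpg]; exact hkey i
      _ = d i * p * g := by ring
  have hq1 : q = 1 := by
    have hdvd : ∀ i ∈ Finset.univ, q ∣ d i := by
      intro i _
      have : q ∣ d i * p := ⟨d' i, by rw [← hkey2 i]; ring⟩
      exact (Nat.Coprime.dvd_of_dvd_mul_right hcop.symm this)
    have := Finset.dvd_gcd hdvd
    rw [hprim] at this
    exact Nat.dvd_one.mp this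
  have hkey3 : ∀ i, d' i = d i * p := by
    intro i; have := hkey2 i; rwa [hq1, mul_one] at this
  have hppos : 0 < p := by
    rcases Nat.eq_zero_or_pos p with h0 | h0
    · exfalso; apply hi₀; rw [hkey3 i₀, h0, mul_zero]
    · exact h0
  have hp1 : p = 1 := by
    have h1 := hkey3 i₀
    have h2 := hle i₀
    have h3 : 0 < d i₀ := lt_of_lt_of_le (Nat.pos_of_ne_zero hi₀) (hle i₀)
    nlinarith [hppos, h3, h2, h1]
  exact hned (funext fun i => by rw [hkey3 i, hp1, mul_one])
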